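/- Let r̂ : (0,∞) → [0,∞) be bounded and suppose log(t)·r̂(z/t) → L ∈ (0,∞) as t → ∞ for each fixed z > 0, with the uniform bound log(t)·r̂(z/t) ≤ C for all z ∈ (0, √t] and all large t. Then log(t)/t · ∫₀^∞ 4(1 − cos(tω))/ω² · r̂(ω) dω → 4L ∫₀^∞ (1 − cos z)/z² dz = 2πL as t → ∞. -/

import Mathlib

open MeasureTheory Filter Set Real

-- exp decay derivative
lemma hasDerivAt_expneg (s x : ℝ) :
    HasDerivAt (fun y : ℝ => Real.exp (-(s*y))) (-s * Real.exp (-(s*x))) x := by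
  have h1 : HasDerivAt (fun y : ℝ => -(s*y)) (-s) x := by
    simpa using ((hasDerivAt_id x).const_mul s).fun_neg
  simpa [mul_comm] using h1.exp

lemma tendsto_expneg (s : ℝ) (hs : 0 < s) :
    Tendsto (fun y : ℝ => Real.exp (-(s*y))) atTop (nhds 0) := by
  have : Tendsto (fun y : ℝ => s * y) atTop atTop :=
    Tendsto.const_mul_atTop hs tendsto_id
  exact (Real.tendsto_exp_neg_atTop_nhds_zero).comp this

lemma one_sub_cos_nonneg (x : ℝ) : 0 ≤ 1 - Real.cos x :=
  sub_nonneg.2 (Real.cos_le_one x)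

lemma one_sub_cos_le_two (x : ℝ) : 1 - Real.cos x ≤ 2 := by
  nlinarith [Real.neg_one_le_cos x]

/-- antiderivative of `(1-cos x) e^{-sx}` -/
noncomputable def Fad (s x : ℝ) : ℝ :=
  -Real.exp (-(s*x))/s + Real.exp (-(s*x))*(s*Real.cos x - Real.sin x)/(1+s^2)

lemma hasDerivAt_Fad (s : ℝ) (hs : 0 < s) (x : ℝ) :
    HasDerivAt (Fad s) ((1 - Real.cos x) * Real.exp (-(s*x))) x := by
  have h1 := ((hasDerivAt_expneg s x).neg.div_const s)
  have h2 := (((hasDerivAt_expneg s x).mul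
    (((Real.hasDerivAt_cos x).const_mul s).sub (Real.hasDerivAt_sin x)))).div_const (1+s^2)
  have := h1.add h2
  refine this.congr_deriv ?_
  have hs2 : (1+s^2) ≠ 0 := by positivity
  simp only [Pi.sub_apply]
  field_simp
  ring

lemma tendsto_Fad (s : ℝ) (hs : 0 < s) : Tendsto (Fad s) atTop (nhds 0) := by
  have he := tendsto_expneg s hs
  have h1 : Tendsto (fun x => -Real.exp (-(s*x))/s) atTop (nhds 0) := by
    simpa using (he.neg.div_const s)
  have h2 : Tendsto (fun x => Real.exp (-(s*x))*(s*Real.cos x - Real.sin x)/(1+s^2))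
      atTop (nhds 0) := by
    have hb : Tendsto (fun x => Real.exp (-(s*x)) * ((s+1)/(1+s^2))) atTop (nhds 0) := by
      simpa using he.mul_const ((s+1)/(1+s^2))
    refine squeeze_zero_norm' ?_ hb
    filter_upwards with x
    have h3 : |s*Real.cos x - Real.sin x| ≤ s + 1 := by
      calc |s*Real.cos x - Real.sin x| ≤ |s*Real.cos x| + |Real.sin x| := abs_sub _ _
        _ = s * |Real.cos x| + |Real.sin x| := by rw [abs_mul, abs_of_pos hs]
        _ ≤ s * 1 + 1 := by gcongr; exacts [Real.abs_cos_le_one x, Real.abs_sin_le_one x]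
        _ = s + 1 := by ring
    have h4 : (0:ℝ) < 1 + s^2 := by positivity
    rw [Real.norm_eq_abs, abs_div, abs_of_pos h4, abs_mul, abs_of_pos (Real.exp_pos _),
      mul_div_assoc]
    gcongr
  have h12 := h1.add h2
  rw [add_zero] at h12
  exact h12

lemma lap1_aux (s : ℝ) (hs : 0 < s) :
    (∫ x in Ioi (0:ℝ), (1 - Real.cos x) * Real.exp (-(s*x))) = 1/s - s/(1+s^2) ∧
    IntegrableOn (fun x => (1 - Real.cos x) * Real.exp (-(s*x))) (Ioi (0:ℝ)) := by
  have hd : ∀ x ∈ Ici (0:ℝ), HasDerivAt (Fad s) ((1 - Real.cos x) * Real.exp (-(s*x))) x :=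
    fun x _ => hasDerivAt_Fad s hs x
  have hnn : ∀ x ∈ Ioi (0:ℝ), 0 ≤ (1 - Real.cos x) * Real.exp (-(s*x)) :=
    fun x _ => mul_nonneg (one_sub_cos_nonneg x) (Real.exp_pos _).le
  have hint : IntegrableOn (fun x => (1 - Real.cos x) * Real.exp (-(s*x))) (Ioi (0:ℝ)) :=
    integrableOn_Ioi_deriv_of_nonneg' hd hnn (tendsto_Fad s hs)
  refine ⟨?_, hint⟩
  have := integral_Ioi_of_hasDerivAt_of_tendsto' hd hint (tendsto_Fad s hs)
  rw [this]
  simp [Fad]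
  field_simp
  ring

lemma lap1 (s : ℝ) (hs : 0 < s) :
    (∫ x in Ioi (0:ℝ), s * Real.exp (-(s*x)) * (1 - Real.cos x)) = (1+s^2)⁻¹ := by
  have h := (lap1_aux s hs).1
  have h2 : (∫ x in Ioi (0:ℝ), s * Real.exp (-(s*x)) * (1 - Real.cos x))
      = s * ∫ x in Ioi (0:ℝ), (1 - Real.cos x) * Real.exp (-(s*x)) := by
    rw [← integral_const_mul]
    apply setIntegral_congr_fun measurableSet_Ioi
    intro x _; ring
  rw [h2, h]
  have hs2 : (1+s^2) ≠ 0 := by positivity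
  field_simp
  ring

lemma lap1_int (s : ℝ) (hs : 0 < s) :
    IntegrableOn (fun x => s * Real.exp (-(s*x)) * (1 - Real.cos x)) (Ioi (0:ℝ)) := by
  have h := (lap1_aux s hs).2.const_mul s
  exact h.congr (ae_of_all _ (fun x => by ring))

noncomputable def Gad (x s : ℝ) : ℝ := -((s*x+1)/x^2) * Real.exp (-(s*x))

lemma hasDerivAt_Gad (x : ℝ) (hx : 0 < x) (s : ℝ) :
    HasDerivAt (Gad x) (s * Real.exp (-(s*x))) s := by
  have he : HasDerivAt (fun s : ℝ => Real.exp (-(s*x))) (-x * Real.exp (-(s*x))) s := by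
    have := hasDerivAt_expneg x s
    simpa [mul_comm] using this
  have hl : HasDerivAt (fun s : ℝ => -((s*x+1)/x^2)) (-(x/x^2)) s := by
    have h0 : HasDerivAt (fun s : ℝ => s*x+1) x s := by
      simpa using ((hasDerivAt_id s).mul_const x).add_const 1
    simpa using (h0.div_const (x^2)).fun_neg
  have h := hl.mul he
  refine h.congr_deriv ?_
  field_simp
  ring

lemma tendsto_Gad (x : ℝ) (hx : 0 < x) : Tendsto (Gad x) atTop (nhds 0) := by
  have h1 : Tendsto (fun y : ℝ => y * Real.exp (-y) + Real.exp (-y)) atTop (nhds 0) := by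
    have := tendsto_pow_mul_exp_neg_atTop_nhds_zero 1
    simpa using this.add Real.tendsto_exp_neg_atTop_nhds_zero
  have h2 : Tendsto (fun s : ℝ => s*x) atTop atTop :=
    Tendsto.atTop_mul_const hx tendsto_id
  have h3 := (h1.comp h2).const_mul (-(1/x^2))
  have h4 : ∀ s : ℝ, (-(1/x^2)) * ((s*x) * Real.exp (-(s*x)) + Real.exp (-(s*x))) = Gad x s := by
    intro s; unfold Gad; field_simp
  have h5 : Tendsto (fun s : ℝ => (-(1/x^2)) * ((s*x) * Real.exp (-(s*x)) + Real.exp (-(s*x))))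
      atTop (nhds 0) := by simpa using h3
  exact Tendsto.congr h4 h5

lemma lap2 (x : ℝ) (hx : 0 < x) :
    (∫ s in Ioi (0:ℝ), s * Real.exp (-(s*x)) * (1 - Real.cos x)) = (1 - Real.cos x)/x^2 := by
  have hd : ∀ s ∈ Ici (0:ℝ), HasDerivAt (Gad x) (s * Real.exp (-(s*x))) s :=
    fun s _ => hasDerivAt_Gad x hx s
  have hnn : ∀ s ∈ Ioi (0:ℝ), 0 ≤ s * Real.exp (-(s*x)) :=
    fun s hs => mul_nonneg (le_of_lt hs) (Real.exp_pos _).le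
  have hint := integrableOn_Ioi_deriv_of_nonneg' hd hnn (tendsto_Gad x hx)
  have hval := integral_Ioi_of_hasDerivAt_of_tendsto' hd hint (tendsto_Gad x hx)
  have h2 : (∫ s in Ioi (0:ℝ), s * Real.exp (-(s*x)) * (1 - Real.cos x))
      = (∫ s in Ioi (0:ℝ), s * Real.exp (-(s*x))) * (1 - Real.cos x) := by
    rw [← integral_mul_const]
  rw [h2, hval]
  simp only [Gad, zero_mul, neg_zero, Real.exp_zero, mul_one, zero_add, zero_sub, neg_neg]
  field_simp

lemma dirichlet_value : ∫ x in Ioi (0:ℝ), (1 - Real.cos x)/x^2 = π/2 := by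
  set μ := volume.restrict (Ioi (0:ℝ)) with hμ
  set f : ℝ → ℝ → ℝ := fun s x => s * Real.exp (-(s*x)) * (1 - Real.cos x) with hf
  have hcont : Continuous (Function.uncurry f) := by
    apply Continuous.mul
    apply Continuous.mul
    · exact continuous_fst
    · exact (continuous_fst.mul continuous_snd).neg.rexp
    · exact (continuous_const.sub (Real.continuous_cos.comp continuous_snd))
  have hmeas : AEStronglyMeasurable (Function.uncurry f) (μ.prod μ) := hcont.aestronglyMeasurable
  have h1 : ∀ᵐ s ∂μ, Integrable (f s) μ := by
    rw [hμ, ae_restrict_iff' measurableSet_Ioi]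
    exact ae_of_all _ (fun s hs => lap1_int s hs)
  have h2 : Integrable (fun s => ∫ x, ‖f s x‖ ∂μ) μ := by
    have hb : Integrable (fun s : ℝ => (1+s^2)⁻¹) μ := integrable_inv_one_add_sq.integrableOn
    apply hb.congr
    rw [hμ, Filter.EventuallyEq, ae_restrict_iff' measurableSet_Ioi]
    refine ae_of_all _ (fun s hs => ?_)
    have : (∫ x, ‖f s x‖ ∂μ) = ∫ x, f s x ∂μ := by
      apply integral_congr_ae
      refine ae_of_all _ (fun x => ?_)
      show ‖f s x‖ = f s x
      rw [Real.norm_eq_abs, abs_of_nonneg]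
      exact mul_nonneg (mul_nonneg (le_of_lt hs) (Real.exp_pos _).le) (one_sub_cos_nonneg x)
    rw [this]
    exact (lap1 s hs).symm
  have hprod : Integrable (Function.uncurry f) (μ.prod μ) := (integrable_prod_iff hmeas).2 ⟨h1, h2⟩
  have hswap := integral_integral_swap hprod
  have hL : (∫ s, ∫ x, f s x ∂μ ∂μ) = π/2 := by
    have e1 : (∫ s, ∫ x, f s x ∂μ ∂μ) = ∫ s in Ioi (0:ℝ), (1+s^2)⁻¹ := by
      rw [hμ]
      apply setIntegral_congr_fun measurableSet_Ioi
      intro s hs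
      exact lap1 s hs
    rw [e1, integral_Ioi_inv_one_add_sq]
    simp [Real.arctan_zero]
  have hR : (∫ x, ∫ s, f s x ∂μ ∂μ) = ∫ x in Ioi (0:ℝ), (1 - Real.cos x)/x^2 := by
    rw [hμ]
    apply setIntegral_congr_fun measurableSet_Ioi
    intro x hx
    exact lap2 x hx
  rw [← hR, ← hswap, hL]

lemma integrableOn_phi : IntegrableOn (fun x => (1 - Real.cos x)/x^2) (Ioi (0:ℝ)) := by
  have h1 : IntegrableOn (fun x => (1 - Real.cos x)/x^2) (Ioc (0:ℝ) 1) := by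
    apply Measure.integrableOn_of_bounded (M := 1/2)
    · exact measure_Ioc_lt_top.ne
    · exact Measurable.aestronglyMeasurable (by measurability)
    · rw [ae_restrict_iff' measurableSet_Ioc]
      refine ae_of_all _ (fun x hx => ?_)
      have hx0 : 0 < x := hx.1
      have h2 : 1 - Real.cos x ≤ x^2/2 := by
        nlinarith [Real.one_sub_sq_div_two_le_cos (x := x)]
      rw [Real.norm_eq_abs, abs_of_nonneg (div_nonneg (one_sub_cos_nonneg x) (by positivity)),
        div_le_iff₀ (by positivity)]
      nlinarith
  have h2 : IntegrableOn (fun x => (1 - Real.cos x)/x^2) (Ioi (1:ℝ)) := by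
    have hb : IntegrableOn (fun x : ℝ => 2 * x ^ (-2:ℝ)) (Ioi (1:ℝ)) :=
      (integrableOn_Ioi_rpow_of_lt (by norm_num) one_pos).const_mul 2
    apply hb.mono'
    · exact Measurable.aestronglyMeasurable (by measurability)
    · rw [ae_restrict_iff' measurableSet_Ioi]
      refine ae_of_all _ (fun x hx => ?_)
      have hx1 : (1:ℝ) < x := hx
      have hx0 : (0:ℝ) < x := by linarith
      have hr : x ^ (-2:ℝ) = (x^2)⁻¹ := by
        rw [show ((-2:ℝ)) = -((2:ℕ):ℝ) by norm_num, Real.rpow_neg hx0.le, Real.rpow_natCast]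
      rw [Real.norm_eq_abs, abs_of_nonneg (div_nonneg (one_sub_cos_nonneg x) (by positivity)),
        hr, div_eq_mul_inv]
      gcongr
      exact one_sub_cos_le_two x
  have := h1.union h2
  rwa [Ioc_union_Ioi_eq_Ioi zero_le_one] at this

lemma phi_nonneg (z : ℝ) : 0 ≤ (1 - Real.cos z)/z^2 :=
  div_nonneg (one_sub_cos_nonneg z) (sq_nonneg z)

lemma phi4_nonneg (z : ℝ) : 0 ≤ 4*(1 - Real.cos z)/z^2 :=
  div_nonneg (by nlinarith [one_sub_cos_nonneg z]) (sq_nonneg z)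

theorem stmt_18 (r : ℝ → ℝ) (L : ℝ) (hL : 0 < L)
    (hmeas : Measurable r)
    (hnonneg : ∀ ω ∈ Ioi (0:ℝ), 0 ≤ r ω)
    (hbdd : ∃ B : ℝ, ∀ ω ∈ Ioi (0:ℝ), r ω ≤ B)
    (hptwise : ∀ z > (0:ℝ),
      Tendsto (fun t => Real.log t * r (z / t)) atTop (nhds L))
    (hunif : ∃ C T₀ : ℝ, ∀ t ≥ T₀, ∀ z : ℝ, 0 < z → z ≤ Real.sqrt t →
      Real.log t * r (z / t) ≤ C) :
    Tendsto (fun t => Real.log t / t *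
        ∫ ω in Ioi (0:ℝ), 4 * (1 - Real.cos (t * ω)) / ω ^ 2 * r ω)
      atTop (nhds (2 * π * L)) := by
  obtain ⟨B, hB⟩ := hbdd
  obtain ⟨C, T₀, hC⟩ := hunif
  have hB0 : 0 ≤ B := le_trans (hnonneg 1 (by norm_num)) (hB 1 (by norm_num))
  set F : ℝ → ℝ → ℝ := fun t z => Real.log t * (4*(1 - Real.cos z)/z^2 * r (z/t)) with hFdef
  -- measurability
  have hFmeas : ∀ t, Measurable (F t) := by
    intro t
    apply Measurable.mul measurable_const
    apply Measurable.mul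
    · exact (measurable_const.mul (measurable_const.sub Real.measurable_cos)).div
        (measurable_id.pow_const 2)
    · exact hmeas.comp (measurable_id.div_const t)
  -- integrability of F t on Ioi 0, for t ≥ 1
  have hFint : ∀ t : ℝ, 1 ≤ t → IntegrableOn (F t) (Ioi (0:ℝ)) := by
    intro t ht
    have ht0 : (0:ℝ) < t := lt_of_lt_of_le one_pos ht
    have hlog : 0 ≤ Real.log t := Real.log_nonneg ht
    apply Integrable.mono' ((integrableOn_phi.const_mul (Real.log t * B * 4)))
    · exact (hFmeas t).aestronglyMeasurable
    · rw [ae_restrict_iff' measurableSet_Ioi]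
      refine ae_of_all _ (fun z hz => ?_)
      have hz0 : (0:ℝ) < z := hz
      have hr0 : 0 ≤ r (z/t) := hnonneg _ (div_pos hz0 ht0)
      have hrB : r (z/t) ≤ B := hB _ (div_pos hz0 ht0)
      have hphi : 0 ≤ (1 - Real.cos z)/z^2 :=
        div_nonneg (one_sub_cos_nonneg z) (by positivity)
      have hF0 : 0 ≤ F t z :=
        mul_nonneg hlog (mul_nonneg (phi4_nonneg z) hr0)
      rw [Real.norm_eq_abs, abs_of_nonneg hF0]
      have e0 : F t z = (Real.log t * r (z/t) * 4) * ((1 - Real.cos z)/z^2) := by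
        simp only [hFdef]; ring
      rw [e0]
      have e1 : Real.log t * B * 4 * ((1 - Real.cos z)/z^2)
          = (Real.log t * B * 4) * ((1 - Real.cos z)/z^2) := by ring
      rw [e1]
      apply mul_le_mul_of_nonneg_right _ (phi_nonneg z)
      have := mul_le_mul_of_nonneg_left hrB hlog
      nlinarith
  -- the DCT part
  have hA : Tendsto (fun t => ∫ z in Ioi (0:ℝ),
      (Ioc (0:ℝ) (Real.sqrt t)).indicator (F t) z) atTop (nhds (2 * π * L)) := by
    have key : (∫ z in Ioi (0:ℝ), (4*L) * ((1 - Real.cos z)/z^2)) = 2 * π * L := by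
      rw [integral_const_mul, dirichlet_value]; ring
    rw [← key]
    apply tendsto_integral_filter_of_dominated_convergence
      (bound := fun z => (4 * max C 0) * ((1 - Real.cos z)/z^2))
    · refine Eventually.of_forall (fun t => ?_)
      exact ((hFmeas t).indicator measurableSet_Ioc).aestronglyMeasurable
    · filter_upwards [eventually_ge_atTop (max T₀ 1)] with t ht
      have ht1 : (1:ℝ) ≤ t := le_trans (le_max_right _ _) ht
      have ht0 : (0:ℝ) < t := lt_of_lt_of_le one_pos ht1
      have hlog : 0 ≤ Real.log t := Real.log_nonneg ht1
      rw [ae_restrict_iff' measurableSet_Ioi]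
      refine ae_of_all _ (fun z hz => ?_)
      have hz0 : (0:ℝ) < z := hz
      have hphi : 0 ≤ (1 - Real.cos z)/z^2 :=
        div_nonneg (one_sub_cos_nonneg z) (by positivity)
      by_cases hmem : z ∈ Ioc (0:ℝ) (Real.sqrt t)
      · rw [indicator_of_mem hmem]
        have hr0 : 0 ≤ r (z/t) := hnonneg _ (div_pos hz0 ht0)
        have hCz : Real.log t * r (z/t) ≤ C :=
          hC t (le_trans (le_max_left _ _) ht) z hz0 hmem.2
        have hF0 : 0 ≤ F t z :=
          mul_nonneg hlog (mul_nonneg (phi4_nonneg z) hr0)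
        rw [Real.norm_eq_abs, abs_of_nonneg hF0]
        have e : F t z = (Real.log t * r (z/t)) * (4 * ((1 - Real.cos z)/z^2)) := by
          simp only [hFdef]; ring
        rw [e]
        have : (4 * max C 0) * ((1 - Real.cos z)/z^2)
            = max C 0 * (4 * ((1 - Real.cos z)/z^2)) := by ring
        rw [this]
        exact mul_le_mul_of_nonneg_right (le_trans hCz (le_max_left _ _))
          (mul_nonneg (by norm_num) (phi_nonneg z))
      · rw [indicator_of_notMem hmem]
        simp only [norm_zero]
        exact mul_nonneg (by positivity) (phi_nonneg z)
    · exact integrableOn_phi.const_mul _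
    · rw [ae_restrict_iff' measurableSet_Ioi]
      refine ae_of_all _ (fun z hz => ?_)
      have hz0 : (0:ℝ) < z := hz
      have hlim : Tendsto (fun t => F t z) atTop (nhds ((4*L) * ((1 - Real.cos z)/z^2))) := by
        have h1 := (hptwise z hz0).const_mul (4*(1 - Real.cos z)/z^2)
        have h2 : (4*(1 - Real.cos z)/z^2) * L = (4*L) * ((1 - Real.cos z)/z^2) := by ring
        rw [h2] at h1
        apply Tendsto.congr _ h1
        intro t; simp only [hFdef]; ring
      apply hlim.congr'
      filter_upwards [eventually_ge_atTop (z^2)] with t ht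
      have hzt : z ≤ Real.sqrt t := by
        rw [show z = Real.sqrt (z^2) by rw [Real.sqrt_sq hz0.le]]
        exact Real.sqrt_le_sqrt ht
      rw [indicator_of_mem (show z ∈ Ioc (0:ℝ) (Real.sqrt t) from ⟨hz0, hzt⟩)]
  -- tail part
  have hT : Tendsto (fun t => ∫ z in Ioi (Real.sqrt t), F t z) atTop (nhds 0) := by
    have hlim : Tendsto (fun t : ℝ => (8*B) * (Real.log t / Real.sqrt t)) atTop (nhds 0) := by
      have h0 := (isLittleO_log_rpow_atTop (by norm_num : (0:ℝ) < 1/2)).tendsto_div_nhds_zero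
      have h1 : Tendsto (fun t : ℝ => Real.log t / Real.sqrt t) atTop (nhds 0) := by
        apply h0.congr
        intro t
        rw [Real.sqrt_eq_rpow]
      simpa using h1.const_mul (8*B)
    apply squeeze_zero_norm' _ hlim
    filter_upwards [eventually_ge_atTop (1:ℝ)] with t ht1
    have ht0 : (0:ℝ) < t := lt_of_lt_of_le one_pos ht1
    have hst : 0 < Real.sqrt t := Real.sqrt_pos.2 ht0
    have hlog : 0 ≤ Real.log t := Real.log_nonneg ht1
    have hbint : IntegrableOn (fun z : ℝ => (8*B*Real.log t) * z^(-2:ℝ)) (Ioi (Real.sqrt t)) :=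
      (integrableOn_Ioi_rpow_of_lt (by norm_num) hst).const_mul _
    have hbound : ∀ᵐ z ∂(volume.restrict (Ioi (Real.sqrt t))),
        ‖F t z‖ ≤ (8*B*Real.log t) * z^(-2:ℝ) := by
      rw [ae_restrict_iff' measurableSet_Ioi]
      refine ae_of_all _ (fun z hz => ?_)
      have hz0 : (0:ℝ) < z := lt_trans hst hz
      have hz2 : (0:ℝ) < z^2 := by positivity
      have hr0 : 0 ≤ r (z/t) := hnonneg _ (div_pos hz0 ht0)
      have hrB : r (z/t) ≤ B := hB _ (div_pos hz0 ht0)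
      have hF0 : 0 ≤ F t z := mul_nonneg hlog (mul_nonneg (phi4_nonneg z) hr0)
      rw [Real.norm_eq_abs, abs_of_nonneg hF0]
      have hrp : z ^ (-2:ℝ) = (z^2)⁻¹ := by
        rw [show ((-2:ℝ)) = -((2:ℕ):ℝ) by norm_num, Real.rpow_neg hz0.le, Real.rpow_natCast]
      rw [hrp]
      have key : F t z ≤ Real.log t * (8/z^2 * B) := by
        have h1 : 4*(1-Real.cos z)/z^2 ≤ 8/z^2 := by
          gcongr
          nlinarith [one_sub_cos_le_two z]
        have h2 : 4*(1-Real.cos z)/z^2 * r (z/t) ≤ 8/z^2 * B :=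
          mul_le_mul h1 hrB hr0 (by positivity)
        have h3 := mul_le_mul_of_nonneg_left h2 hlog
        exact h3
      refine key.trans (le_of_eq ?_)
      field_simp
    calc ‖∫ z in Ioi (Real.sqrt t), F t z‖
        ≤ ∫ z in Ioi (Real.sqrt t), (8*B*Real.log t) * z^(-2:ℝ) :=
          norm_integral_le_of_norm_le hbint hbound
      _ = (8*B*Real.log t) * ∫ z in Ioi (Real.sqrt t), z^(-2:ℝ) := integral_const_mul _ _
      _ = (8*B) * (Real.log t / Real.sqrt t) := by
          rw [integral_Ioi_rpow_of_lt (by norm_num) hst]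
          have e2 : -Real.sqrt t ^ ((-2:ℝ)+1)/((-2:ℝ)+1) = (Real.sqrt t)⁻¹ := by
            norm_num
            rw [Real.rpow_neg_one]
          rw [e2]
          ring
  -- assembly
  have hsum := hA.add hT
  rw [add_zero] at hsum
  apply Tendsto.congr' _ hsum
  filter_upwards [eventually_ge_atTop (1:ℝ)] with t ht1
  have ht0 : (0:ℝ) < t := lt_of_lt_of_le one_pos ht1
  have hind : (∫ z in Ioi (0:ℝ), (Ioc (0:ℝ) (Real.sqrt t)).indicator (F t) z)
      = ∫ z in Ioc (0:ℝ) (Real.sqrt t), F t z := by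
    rw [setIntegral_indicator measurableSet_Ioc,
      inter_eq_self_of_subset_right Ioc_subset_Ioi_self]
  have hsplit : (∫ z in Ioc (0:ℝ) (Real.sqrt t), F t z) + (∫ z in Ioi (Real.sqrt t), F t z)
      = ∫ z in Ioi (0:ℝ), F t z := by
    rw [← setIntegral_union (Ioc_disjoint_Ioi le_rfl) measurableSet_Ioi
      ((hFint t ht1).mono_set Ioc_subset_Ioi_self)
      ((hFint t ht1).mono_set (Ioi_subset_Ioi (Real.sqrt_nonneg t))),
      Ioc_union_Ioi_eq_Ioi (Real.sqrt_nonneg t)]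
  have hsub0 := integral_comp_mul_left_Ioi
      (fun ω => 4 * (1 - Real.cos (t * ω)) / ω ^ 2 * r ω) 0 (inv_pos.2 ht0)
  simp only [mul_zero, inv_inv, smul_eq_mul] at hsub0
  have hleft : (∫ x in Ioi (0:ℝ), 4 * (1 - Real.cos (t * (t⁻¹ * x))) / (t⁻¹ * x) ^ 2 * r (t⁻¹ * x))
      = ∫ x in Ioi (0:ℝ), t^2 * (4*(1 - Real.cos x)/x^2 * r (x/t)) := by
    apply setIntegral_congr_fun measurableSet_Ioi
    intro x hx
    have hx0 : (0:ℝ) < x := hx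
    show 4 * (1 - Real.cos (t * (t⁻¹ * x))) / (t⁻¹ * x) ^ 2 * r (t⁻¹ * x)
      = t^2 * (4*(1 - Real.cos x)/x^2 * r (x/t))
    have h1 : t * (t⁻¹ * x) = x := by field_simp
    have h2 : t⁻¹ * x = x/t := by rw [inv_mul_eq_div]
    rw [h1, h2, div_pow, div_div_eq_mul_div]
    field_simp
  rw [hleft, integral_const_mul] at hsub0
  have hY : (∫ ω in Ioi (0:ℝ), 4 * (1 - Real.cos (t * ω)) / ω ^ 2 * r ω)
      = t * ∫ x in Ioi (0:ℝ), 4*(1 - Real.cos x)/x^2 * r (x/t) := by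
    have h3 : t * (t * ∫ x in Ioi (0:ℝ), 4*(1 - Real.cos x)/x^2 * r (x/t))
        = t * ∫ ω in Ioi (0:ℝ), 4 * (1 - Real.cos (t * ω)) / ω ^ 2 * r ω := by
      rw [← hsub0]; ring
    exact (mul_left_cancel₀ (ne_of_gt ht0) h3).symm
  rw [hind, hsplit, hY]
  have : Real.log t / t * (t * ∫ x in Ioi (0:ℝ), 4*(1 - Real.cos x)/x^2 * r (x/t))
      = Real.log t * ∫ x in Ioi (0:ℝ), 4*(1 - Real.cos x)/x^2 * r (x/t) := by
    rw [← mul_assoc, div_mul_cancel₀ _ (ne_of_gt ht0)]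
  rw [this, ← integral_const_mul]
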